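/- arXiv:1201.3564 — 2 statements merged into one kernel-verified Lean document; each statement's English description precedes it below -/
import Mathlib

section
/- For a nondegenerate triangle K in ℝ² and i ≠ j, |K| (∇φ_i)·(∇φ_j) = −(1/2) cot(α_{ij}), where α_{ij} is the angle of K at the vertex opposite the edge connecting a_i and a_j (equivalently, the angle between the edges S_i and S_j). -/
open MeasureTheory
open scoped RealInnerProductSpace

lemma vol_tri_prod :
    volume {p : ℝ × ℝ | 0 ≤ p.1 ∧ 0 ≤ p.2 ∧ p.1 + p.2 ≤ 1} = ENNReal.ofReal (1 / 2) := by
  have hmeas : MeasurableSet {p : ℝ × ℝ | 0 ≤ p.1 ∧ 0 ≤ p.2 ∧ p.1 + p.2 ≤ 1} := by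
    apply MeasurableSet.inter
    · exact measurableSet_le measurable_const measurable_fst
    apply MeasurableSet.inter
    · exact measurableSet_le measurable_const measurable_snd
    · exact measurableSet_le (measurable_fst.add measurable_snd) measurable_const
  rw [MeasureTheory.Measure.volume_eq_prod, Measure.prod_apply hmeas]
  have hsec : ∀ x : ℝ,
      volume (Prod.mk x ⁻¹' {p : ℝ × ℝ | 0 ≤ p.1 ∧ 0 ≤ p.2 ∧ p.1 + p.2 ≤ 1})
        = ENNReal.ofReal (Set.indicator (Set.Icc (0:ℝ) 1) (fun x => 1 - x) x) := by
    intro x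
    by_cases hx : 0 ≤ x
    · have : Prod.mk x ⁻¹' {p : ℝ × ℝ | 0 ≤ p.1 ∧ 0 ≤ p.2 ∧ p.1 + p.2 ≤ 1}
          = Set.Icc 0 (1 - x) := by
        ext y; simp only [Set.mem_preimage, Set.mem_setOf_eq, Set.mem_Icc, hx, true_and]
        constructor
        · rintro ⟨h1, h2⟩; exact ⟨h1, by linarith⟩
        · rintro ⟨h1, h2⟩; exact ⟨h1, by linarith⟩
      rw [this, Real.volume_Icc]
      by_cases hx1 : x ≤ 1
      · rw [Set.indicator_of_mem (Set.mem_Icc.2 ⟨hx, hx1⟩)]; ring_nf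
      · rw [Set.indicator_of_notMem (by simp [hx1])]
        rw [ENNReal.ofReal_eq_zero.2 (by linarith), ENNReal.ofReal_zero]
    · have : Prod.mk x ⁻¹' {p : ℝ × ℝ | 0 ≤ p.1 ∧ 0 ≤ p.2 ∧ p.1 + p.2 ≤ 1} = ∅ := by
        ext y; simp [hx]
      rw [this, Set.indicator_of_notMem (by simp; intro h; exact absurd h hx)]
      simp
  rw [lintegral_congr hsec]
  rw [← MeasureTheory.ofReal_integral_eq_lintegral_ofReal]
  · congr 1
    rw [MeasureTheory.integral_indicator measurableSet_Icc,
      MeasureTheory.integral_Icc_eq_integral_Ioc,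
      ← intervalIntegral.integral_of_le (by norm_num : (0:ℝ) ≤ 1)]
    simp [intervalIntegral.integral_sub intervalIntegrable_const intervalIntegral.intervalIntegrable_id]
    norm_num
  · apply (integrable_indicator_iff measurableSet_Icc).2
    apply ContinuousOn.integrableOn_compact isCompact_Icc
    exact (continuous_const.sub continuous_id).continuousOn
  · filter_upwards with x
    apply Set.indicator_nonneg
    intro y hy; simp at hy; linarith [hy.2]

noncomputable def e₀ : EuclideanSpace ℝ (Fin 2) := (WithLp.equiv 2 (Fin 2 → ℝ)).symm ![1, 0]
noncomputable def e₁ : EuclideanSpace ℝ (Fin 2) := (WithLp.equiv 2 (Fin 2 → ℝ)).symm ![0, 1]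

lemma vol_tri_eucl :
    volume {x : EuclideanSpace ℝ (Fin 2) | 0 ≤ x 0 ∧ 0 ≤ x 1 ∧ x 0 + x 1 ≤ 1}
      = ENNReal.ofReal (1 / 2) := by
  have h1 := EuclideanSpace.volume_preserving_symm_measurableEquiv_toLp (Fin 2)
  have h2 := MeasureTheory.volume_preserving_finTwoArrow ℝ
  have key : {x : EuclideanSpace ℝ (Fin 2) | 0 ≤ x 0 ∧ 0 ≤ x 1 ∧ x 0 + x 1 ≤ 1}
      = (MeasurableEquiv.toLp 2 (Fin 2 → ℝ)).symm ⁻¹'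
        ((MeasurableEquiv.finTwoArrow : (Fin 2 → ℝ) ≃ᵐ ℝ × ℝ) ⁻¹'
          {p : ℝ × ℝ | 0 ≤ p.1 ∧ 0 ≤ p.2 ∧ p.1 + p.2 ≤ 1}) := by
    ext x
    simp [MeasurableEquiv.finTwoArrow]
  rw [key, ← MeasurableEquiv.map_apply, h1.map_eq, ← MeasurableEquiv.map_apply, h2.map_eq,
    vol_tri_prod]

lemma apply_lin (i : Fin 2) : IsLinearMap ℝ (fun x : EuclideanSpace ℝ (Fin 2) => x i) :=
  ⟨fun _ _ => rfl, fun _ _ => rfl⟩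

lemma e₀_apply_0 : e₀ 0 = 1 := rfl
lemma e₀_apply_1 : e₀ 1 = 0 := rfl
lemma e₁_apply_0 : e₁ 0 = 0 := rfl
lemma e₁_apply_1 : e₁ 1 = 1 := rfl

lemma tri_eq_hull :
    {x : EuclideanSpace ℝ (Fin 2) | 0 ≤ x 0 ∧ 0 ≤ x 1 ∧ x 0 + x 1 ≤ 1}
      = convexHull ℝ {0, e₀, e₁} := by
  apply Set.Subset.antisymm
  · rintro x ⟨h0, h1, h2⟩
    have hx : x = (1 - x 0 - x 1) • (0 : EuclideanSpace ℝ (Fin 2)) + x 0 • e₀ + x 1 • e₁ := by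
      ext i
      fin_cases i <;>
        simp [e₀, e₁, PiLp.smul_apply, PiLp.add_apply, WithLp.equiv_symm_apply]
    rw [hx]
    have hconv := convex_convexHull ℝ ({0, e₀, e₁} : Set (EuclideanSpace ℝ (Fin 2)))
    have m0 : (0 : EuclideanSpace ℝ (Fin 2)) ∈ convexHull ℝ ({0, e₀, e₁} : Set _) :=
      subset_convexHull ℝ _ (by simp)
    have m1 : e₀ ∈ convexHull ℝ ({0, e₀, e₁} : Set (EuclideanSpace ℝ (Fin 2))) :=
      subset_convexHull ℝ _ (by simp)
    have m2 : e₁ ∈ convexHull ℝ ({0, e₀, e₁} : Set (EuclideanSpace ℝ (Fin 2))) :=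
      subset_convexHull ℝ _ (by simp)
    have hcm := Finset.centerMass_mem_convexHull (Finset.univ : Finset (Fin 3))
      (w := ![1 - x 0 - x 1, x 0, x 1]) (z := ![0, e₀, e₁]) (s := ({0, e₀, e₁} : Set (EuclideanSpace ℝ (Fin 2))))
      (by intro i _; fin_cases i <;> simp <;> linarith)
      (by simp [Fin.sum_univ_three]; linarith)
      (hz := by intro i _; fin_cases i <;> simp [Set.mem_insert_iff])
    rwa [Finset.centerMass_eq_of_sum_1 _ _
      (by simp [Fin.sum_univ_three]; ring), Fin.sum_univ_three] at hcm
  · apply convexHull_min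
    · rintro x (rfl | rfl | rfl)
      · norm_num
      · refine ⟨by rw [e₀_apply_0]; norm_num, by rw [e₀_apply_1], by
          rw [e₀_apply_0, e₀_apply_1]; norm_num⟩
      · refine ⟨by rw [e₁_apply_0], by rw [e₁_apply_1]; norm_num, by
          rw [e₁_apply_0, e₁_apply_1]; norm_num⟩
    · intro x hx y hy c b hc hb hcb
      obtain ⟨hx0, hx1, hx2⟩ := hx
      obtain ⟨hy0, hy1, hy2⟩ := hy
      have e0 : (c • x + b • y) 0 = c * x 0 + b * y 0 := rfl
      have e1 : (c • x + b • y) 1 = c * x 1 + b * y 1 := rfl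
      refine ⟨by rw [e0]; positivity, by rw [e1]; positivity, by rw [e0, e1]; nlinarith⟩


noncomputable def Lmap (w z : EuclideanSpace ℝ (Fin 2)) :
    EuclideanSpace ℝ (Fin 2) →ₗ[ℝ] EuclideanSpace ℝ (Fin 2) where
  toFun x := x 0 • w + x 1 • z
  map_add' x y := by
    ext i; simp [PiLp.add_apply, PiLp.smul_apply]; ring
  map_smul' c x := by
    ext i; simp [PiLp.add_apply, PiLp.smul_apply]; ring

lemma Lmap_det (w z : EuclideanSpace ℝ (Fin 2)) :
    LinearMap.det (Lmap w z) = w 0 * z 1 - w 1 * z 0 := by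
  rw [← LinearMap.det_toMatrix (PiLp.basisFun 2 ℝ (Fin 2))]
  have h : LinearMap.toMatrix (PiLp.basisFun 2 ℝ (Fin 2)) (PiLp.basisFun 2 ℝ (Fin 2))
      (Lmap w z) = Matrix.of ![![w 0, z 0], ![w 1, z 1]] := by
    ext i j
    rw [LinearMap.toMatrix_apply]
    fin_cases i <;> fin_cases j <;>
      simp [Lmap, PiLp.basisFun_apply, PiLp.basisFun_repr, WithLp.equiv_symm_apply,
        Pi.single_apply, PiLp.add_apply, PiLp.smul_apply]
  rw [h, Matrix.det_fin_two_of]; ring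

lemma hull_volume (p w z : EuclideanSpace ℝ (Fin 2)) :
    volume (convexHull ℝ {p, p + w, p + z})
      = ENNReal.ofReal (|w 0 * z 1 - w 1 * z 0| / 2) := by
  set L := Lmap w z with hL
  have hL0 : L (0 : EuclideanSpace ℝ (Fin 2)) = 0 := by simp
  have hLe₀ : L e₀ = w := by
    show (e₀ 0) • w + (e₀ 1) • z = w
    norm_num [e₀, WithLp.equiv_symm_apply]
  have hLe₁ : L e₁ = z := by
    show (e₁ 0) • w + (e₁ 1) • z = z
    norm_num [e₁, WithLp.equiv_symm_apply]
  have himg : ({p, p + w, p + z} : Set (EuclideanSpace ℝ (Fin 2)))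
      = (fun y => y + p) '' (L '' {0, e₀, e₁}) := by
    rw [Set.image_image]
    simp only [Set.image_insert_eq, Set.image_singleton, hL0, hLe₀, hLe₁]
    simp [Set.insert_comm, add_comm]
  rw [himg, ← Set.image_comp]
  have : convexHull ℝ (((fun y => y + p) ∘ L) '' {0, e₀, e₁})
      = ((fun y => y + p) ∘ L) '' convexHull ℝ {0, e₀, e₁} := by
    have haff : ((fun y => y + p) ∘ ⇑L)
        = ⇑(L.toAffineMap + AffineMap.const ℝ (EuclideanSpace ℝ (Fin 2)) p) := by
      funext x; simp
    rw [haff, AffineMap.image_convexHull]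
  rw [this, Set.image_comp]
  rw [Set.image_add_right]
  rw [measure_preimage_add_right]
  rw [Measure.addHaar_image_linearMap]
  rw [← tri_eq_hull, vol_tri_eucl, Lmap_det]
  rw [← ENNReal.ofReal_mul (abs_nonneg _)]
  ring_nf

lemma key (p0 p1 q0 q1 u0 u1 v0 v1 x0 x1 y0 y1 C S : ℝ)
    (hp : p0 * p0 + p1 * p1 = 1) (hq : q0 * q0 + q1 * q1 = 1)
    (hpu : p0 * u0 + p1 * u1 = 0) (hpv : 0 < p0 * v0 + p1 * v1)
    (hqv : q0 * v0 + q1 * v1 = 0) (hqu : 0 < q0 * u0 + q1 * u1)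
    (hgiu : x0 * u0 + x1 * u1 = 0) (hgiv : x0 * v0 + x1 * v1 = 1)
    (hgjv : y0 * v0 + y1 * v1 = 0) (hgju : y0 * u0 + y1 * u1 = 1)
    (hC : C = -(p0 * q0 + p1 * q1)) (hS : S = Real.sqrt (1 - C ^ 2)) :
    |v0 * u1 - v1 * u0| / 2 * (x0 * y0 + x1 * y1) = -(1 / 2) * (C / S) := by
  obtain ⟨d, hd⟩ : ∃ d, d = p0 * u1 - p1 * u0 := ⟨_, rfl⟩
  obtain ⟨d', hd'⟩ : ∃ d', d' = q0 * v1 - q1 * v0 := ⟨_, rfl⟩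
  obtain ⟨t, ht_⟩ : ∃ t, t = p0 * q1 - p1 * q0 := ⟨_, rfl⟩
  have hu0 : u0 = -p1 * d := by rw [hd]; linear_combination p0 * hpu - u0 * hp
  have hu1 : u1 = p0 * d := by rw [hd]; linear_combination p1 * hpu - u1 * hp
  have hv0 : v0 = -q1 * d' := by rw [hd']; linear_combination q0 * hqv - v0 * hq
  have hv1 : v1 = q0 * d' := by rw [hd']; linear_combination q1 * hqv - v1 * hq
  have hdt : 0 < d * t := by
    have h := hqu
    rw [hu0, hu1] at h
    have e : d * t = q0 * (-p1 * d) + q1 * (p0 * d) := by rw [ht_]; ring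
    linarith [h, e]
  have hd't : d' * t < 0 := by
    have h := hpv
    rw [hv0, hv1] at h
    have e : d' * t = -(p0 * (-q1 * d') + p1 * (q0 * d')) := by rw [ht_]; ring
    linarith [h, e]
  have ht : t ≠ 0 := fun h0 => by rw [h0, mul_zero] at hdt; exact lt_irrefl 0 hdt
  have hd0 : d ≠ 0 := fun h0 => by rw [h0, zero_mul] at hdt; exact lt_irrefl 0 hdt
  have hd'0 : d' ≠ 0 := fun h0 => by rw [h0, zero_mul] at hd't; exact lt_irrefl 0 hd't
  have hdd' : d * d' < 0 := by nlinarith [mul_pos hdt (neg_pos.2 hd't), sq_nonneg t]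
  have hD : u0 * v1 - u1 * v0 = d * d' * t := by rw [hu0, hu1, hv0, hv1, ht_]; ring
  have hDne : d * d' * t ≠ 0 := mul_ne_zero (mul_ne_zero hd0 hd'0) ht
  have hx0 : x0 * (d * d' * t) = -u1 := by
    rw [← hD]; linear_combination v1 * hgiu - u1 * hgiv
  have hx1 : x1 * (d * d' * t) = u0 := by
    rw [← hD]; linear_combination u0 * hgiv - v0 * hgiu
  have hy0 : y0 * (d * d' * t) = v1 := by
    rw [← hD]; linear_combination v1 * hgju - u1 * hgjv
  have hy1 : y1 * (d * d' * t) = -v0 := by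
    rw [← hD]; linear_combination u0 * hgjv - v0 * hgju
  have hiprod : (x0 * y0 + x1 * y1) * (d * d' * t) ^ 2 = -(d * d' * (-C)) := by
    have he : u0 * v0 + u1 * v1 = d * d' * (-C) := by
      rw [hu0, hu1, hv0, hv1, hC]; ring
    calc (x0 * y0 + x1 * y1) * (d * d' * t) ^ 2
        = (x0 * (d * d' * t)) * (y0 * (d * d' * t))
          + (x1 * (d * d' * t)) * (y1 * (d * d' * t)) := by ring
      _ = (-u1) * v1 + u0 * (-v0) := by rw [hx0, hx1, hy0, hy1]
      _ = -(d * d' * (-C)) := by linear_combination -he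
  have hsq : 1 - C ^ 2 = t ^ 2 := by
    rw [hC, ht_]; linear_combination (-(q0 * q0 + q1 * q1)) * hp - hq
  have hSt : S = |t| := by rw [hS, hsq, Real.sqrt_sq_eq_abs]
  have hval : v0 * u1 - v1 * u0 = (-(d * d')) * t := by
    rw [hu0, hu1, hv0, hv1, ht_]; ring
  have habs : |v0 * u1 - v1 * u0| = (-(d * d')) * |t| := by
    rw [hval, abs_mul, abs_of_pos (by linarith : (0:ℝ) < -(d * d'))]
  have hiprod2 : (x0 * y0 + x1 * y1) * (d * d' * t ^ 2) = C :=
    mul_left_cancel₀ (mul_ne_zero hd0 hd'0) (by linear_combination hiprod)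
  have hip : x0 * y0 + x1 * y1 = C / (d * d' * t ^ 2) := by
    have hne : d * d' * t ^ 2 ≠ 0 := by positivity
    field_simp
    linear_combination hiprod2
  rw [habs, hSt, hip]
  rcases lt_or_gt_of_ne ht with htneg | htpos
  · rw [abs_of_neg htneg]
    field_simp
  · rw [abs_of_pos htpos]
    field_simp

lemma inner2 (x y : EuclideanSpace ℝ (Fin 2)) : ⟪x, y⟫ = x 0 * y 0 + x 1 * y 1 := by
  simp [PiLp.inner_apply, Fin.sum_univ_two]; ring

/-- For a nondegenerate triangle `K ⊂ ℝ²` and `i ≠ j`,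
`|K| ⟪∇φ_i, ∇φ_j⟫ = -(1/2) cot (α i j)`, where `α i j ∈ (0, π)` is the interior
angle of `K` between the edges opposite `a i` and `a j`, characterized by
`cos (α i j) = -⟪n i, n j⟫` for the unit inward normals. -/
theorem stmt3
    (a : Fin 3 → EuclideanSpace ℝ (Fin 2))
    (ha : AffineIndependent ℝ a)
    (φ : Fin 3 → (EuclideanSpace ℝ (Fin 2) →ᵃ[ℝ] ℝ))
    (hφ : ∀ i j, φ i (a j) = if i = j then 1 else 0)
    (g : Fin 3 → EuclideanSpace ℝ (Fin 2))
    (hg : ∀ i v, (φ i).linear v = ⟪g i, v⟫)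
    (n : Fin 3 → EuclideanSpace ℝ (Fin 2))
    (hn_unit : ∀ i, ‖n i‖ = 1)
    (hn_orth : ∀ i j k, j ≠ i → k ≠ i → ⟪n i, a j - a k⟫ = 0)
    (hn_toward : ∀ i j, j ≠ i → 0 < ⟪n i, a i - a j⟫)
    (α : Fin 3 → Fin 3 → ℝ)
    (hα_mem : ∀ i j, i ≠ j → α i j ∈ Set.Ioo 0 Real.pi)
    (hα : ∀ i j, i ≠ j → Real.cos (α i j) = -⟪n i, n j⟫) :
    ∀ i j, i ≠ j →
      (volume (convexHull ℝ (Set.range a))).toReal * ⟪g i, g j⟫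
        = -(1 / 2) * Real.cot (α i j) := by
  intro i j hij
  obtain ⟨k, hki, hkj⟩ : ∃ k : Fin 3, k ≠ i ∧ k ≠ j := by
    revert hij; revert j; revert i; decide
  -- the two edge vectors at vertex a k
  set u : EuclideanSpace ℝ (Fin 2) := a j - a k with hu_def
  set v : EuclideanSpace ℝ (Fin 2) := a i - a k with hv_def
  -- identify the range
  have h3 : ∀ x : Fin 3, x = k ∨ x = i ∨ x = j := by
    intro x
    by_contra hc
    push_neg at hc
    obtain ⟨h1, h2, h3⟩ := hc
    have := Fin.val_ne_of_ne h1
    have := Fin.val_ne_of_ne h2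
    have := Fin.val_ne_of_ne h3
    have := Fin.val_ne_of_ne hki
    have := Fin.val_ne_of_ne hkj
    have := Fin.val_ne_of_ne hij
    have : x.val < 3 := x.isLt
    have : i.val < 3 := i.isLt
    have : j.val < 3 := j.isLt
    have : k.val < 3 := k.isLt
    omega
  have hvi : a k + v = a i := by rw [hv_def]; abel
  have hui : a k + u = a j := by rw [hu_def]; abel
  have hrange : Set.range a = {a k, a k + v, a k + u} := by
    ext y
    simp only [Set.mem_insert_iff, Set.mem_singleton_iff, Set.mem_range]
    constructor
    · rintro ⟨x, rfl⟩
      rcases h3 x with rfl | rfl | rfl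
      · left; rfl
      · right; left; exact hvi.symm
      · right; right; exact hui.symm
    · rintro (rfl | rfl | rfl)
      · exact ⟨k, rfl⟩
      · exact ⟨i, hvi.symm⟩
      · exact ⟨j, hui.symm⟩
  rw [hrange, hull_volume, ENNReal.toReal_ofReal (by positivity)]
  have hp : n i 0 * n i 0 + n i 1 * n i 1 = 1 := by
    have h2 : ⟪n i, n i⟫ = 1 := by
      rw [real_inner_self_eq_norm_sq, hn_unit i]; norm_num
    rwa [inner2] at h2
  have hq : n j 0 * n j 0 + n j 1 * n j 1 = 1 := by
    have h2 : ⟪n j, n j⟫ = 1 := by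
      rw [real_inner_self_eq_norm_sq, hn_unit j]; norm_num
    rwa [inner2] at h2
  have hpu : n i 0 * u 0 + n i 1 * u 1 = 0 := by
    have := hn_orth i j k hij.symm hki; rwa [← hu_def, inner2] at this
  have hpv : 0 < n i 0 * v 0 + n i 1 * v 1 := by
    have := hn_toward i k hki; rwa [← hv_def, inner2] at this
  have hqv : n j 0 * v 0 + n j 1 * v 1 = 0 := by
    have := hn_orth j i k hij hkj; rwa [← hv_def, inner2] at this
  have hqu : 0 < n j 0 * u 0 + n j 1 * u 1 := by
    have := hn_toward j k hkj; rwa [← hu_def, inner2] at this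
  have lin_eq : ∀ m x y : Fin 3, ⟪g m, a x - a y⟫ = φ m (a x) - φ m (a y) := by
    intro m x y
    rw [← hg]
    exact (φ m).linearMap_vsub (a x) (a y)
  have hgiu : g i 0 * u 0 + g i 1 * u 1 = 0 := by
    have := lin_eq i j k
    rw [hφ, hφ, if_neg hij, if_neg (Ne.symm hki), ← hu_def, inner2] at this
    linarith
  have hgiv : g i 0 * v 0 + g i 1 * v 1 = 1 := by
    have := lin_eq i i k
    rw [hφ, hφ, if_pos rfl, if_neg (Ne.symm hki), ← hv_def, inner2] at this
    linarith
  have hgjv : g j 0 * v 0 + g j 1 * v 1 = 0 := by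
    have := lin_eq j i k
    rw [hφ, hφ, if_neg hij.symm, if_neg (Ne.symm hkj), ← hv_def, inner2] at this
    linarith
  have hgju : g j 0 * u 0 + g j 1 * u 1 = 1 := by
    have := lin_eq j j k
    rw [hφ, hφ, if_pos rfl, if_neg (Ne.symm hkj), ← hu_def, inner2] at this
    linarith
  have hmem := hα_mem i j hij
  have hC : Real.cos (α i j) = -(n i 0 * n j 0 + n i 1 * n j 1) := by
    rw [hα i j hij, inner2]
  have hS : Real.sin (α i j) = Real.sqrt (1 - Real.cos (α i j) ^ 2) :=
    Real.sin_eq_sqrt_one_sub_cos_sq hmem.1.le hmem.2.le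
  rw [inner2, Real.cot_eq_cos_div_sin]
  exact key (n i 0) (n i 1) (n j 0) (n j 1) (u 0) (u 1) (v 0) (v 1)
    (g i 0) (g i 1) (g j 0) (g j 1) (Real.cos (α i j)) (Real.sin (α i j))
    hp hq hpu hpv hqv hqu hgiu hgiv hgjv hgju hC hS
end

section
/- For a nondegenerate triangle K in ℝ², a symmetric positive definite 2×2 matrix D_K, and i ≠ j: |K| (∇φ_i)^T D_K (∇φ_j) = −(det(D_K)^{1/2} / 2) cot(α_{ij, D_K^{-1}}), where α_{ij, D_K^{-1}} is the angle of the transformed triangle D_K^{-1/2} K between the images of edges S_i and S_j. -/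
open MeasureTheory Matrix
open scoped RealInnerProductSpace
open scoped Pointwise

section Helpers
open Set

noncomputable def triB0 : EuclideanSpace ℝ (Fin 2) := EuclideanSpace.single 0 1
noncomputable def triB1 : EuclideanSpace ℝ (Fin 2) := EuclideanSpace.single 1 1

theorem triLemA : volume {p : ℝ × ℝ | 0 ≤ p.1 ∧ 0 ≤ p.2 ∧ p.1 + p.2 ≤ 1} = ENNReal.ofReal (1/2) := by
  set S := {p : ℝ × ℝ | 0 ≤ p.1 ∧ 0 ≤ p.2 ∧ p.1 + p.2 ≤ 1} with hS
  set R := regionBetween (fun _ => (0:ℝ)) (fun x => 1 - x) (Ioo 0 1) with hRdef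
  have hR : volume R = ENNReal.ofReal (1/2) := by
    have h1 : IntegrableOn (fun _ : ℝ => (0:ℝ)) (Ioo 0 1) :=
      (continuous_const.integrableOn_Icc (a := (0:ℝ)) (b := 1)).mono_set Ioo_subset_Icc_self
    have h2 : IntegrableOn (fun x : ℝ => 1 - x) (Ioo 0 1) :=
      ((continuous_const.sub continuous_id).integrableOn_Icc (a := (0:ℝ)) (b := 1)).mono_set
        Ioo_subset_Icc_self
    rw [hRdef, Measure.volume_eq_prod]
    rw [volume_regionBetween_eq_integral h1 h2 measurableSet_Ioo
      (by intro x hx; simp at hx ⊢; linarith [hx.2])]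
    norm_num
    congr 1
    rw [← MeasureTheory.integral_Ioc_eq_integral_Ioo,
      ← intervalIntegral.integral_of_le (by norm_num : (0:ℝ) ≤ 1)]
    rw [intervalIntegral.integral_sub intervalIntegrable_const
      intervalIntegral.intervalIntegrable_id]
    simp
    norm_num
  have hL1 : volume ({(0:ℝ)} ×ˢ (univ : Set ℝ)) = 0 := by
    rw [Measure.volume_eq_prod, Measure.prod_prod]; simp
  have hL2 : volume ((univ : Set ℝ) ×ˢ {(0:ℝ)}) = 0 := by
    rw [Measure.volume_eq_prod, Measure.prod_prod]; simp
  have hL3 : volume {p : ℝ × ℝ | p.1 + p.2 = 1} = 0 := by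
    have : {p : ℝ × ℝ | p.1 + p.2 = 1} = ((1,0) : ℝ × ℝ) +ᵥ
        (LinearMap.ker ((LinearMap.fst ℝ ℝ ℝ) + (LinearMap.snd ℝ ℝ ℝ)) : Set (ℝ × ℝ)) := by
      ext p
      simp only [Set.mem_vadd_set, LinearMap.mem_ker, SetLike.mem_coe, mem_setOf_eq]
      constructor
      · intro h
        refine ⟨p - (1,0), ?_, by simp⟩
        simp only [LinearMap.mem_ker, LinearMap.add_apply, LinearMap.fst_apply,
          LinearMap.snd_apply, Prod.fst_sub, Prod.snd_sub]
        simp; linarith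
      · rintro ⟨q, hq, rfl⟩
        simp only [LinearMap.mem_ker, LinearMap.add_apply, LinearMap.fst_apply,
          LinearMap.snd_apply] at hq
        simp [Prod.fst_add, Prod.snd_add]; linarith
    rw [this, measure_vadd]
    apply Measure.addHaar_submodule
    intro h
    have h2 : ((1:ℝ),(-2:ℝ)) ∈ LinearMap.ker ((LinearMap.fst ℝ ℝ ℝ) + (LinearMap.snd ℝ ℝ ℝ)) :=
      h ▸ Submodule.mem_top
    simp only [LinearMap.mem_ker, LinearMap.add_apply, LinearMap.fst_apply,
      LinearMap.snd_apply] at h2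
    norm_num at h2
  apply le_antisymm
  · have hsub : S ⊆ R ∪ ({(0:ℝ)} ×ˢ (univ : Set ℝ) ∪ ((univ : Set ℝ) ×ˢ {(0:ℝ)}
        ∪ {p : ℝ × ℝ | p.1 + p.2 = 1})) := by
      rintro ⟨x, y⟩ ⟨hx, hy, hxy⟩
      simp only [mem_union, mem_prod, mem_singleton_iff, mem_univ, mem_setOf_eq]
      by_cases h1 : x = 0
      · exact Or.inr (Or.inl ⟨h1, trivial⟩)
      by_cases h2 : y = 0
      · exact Or.inr (Or.inr (Or.inl ⟨trivial, h2⟩))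
      by_cases h3 : x + y = 1
      · exact Or.inr (Or.inr (Or.inr h3))
      left
      have hx' : 0 < x := lt_of_le_of_ne hx (Ne.symm h1)
      have hy' : 0 < y := lt_of_le_of_ne hy (Ne.symm h2)
      have hxy' : x + y < 1 := lt_of_le_of_ne hxy h3
      exact ⟨⟨hx', by linarith⟩, hy', by dsimp only; linarith⟩
    calc volume S ≤ volume (R ∪ ({(0:ℝ)} ×ˢ (univ : Set ℝ) ∪ ((univ : Set ℝ) ×ˢ {(0:ℝ)}
        ∪ {p : ℝ × ℝ | p.1 + p.2 = 1}))) := measure_mono hsub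
      _ ≤ volume R + (volume ({(0:ℝ)} ×ˢ (univ : Set ℝ)) + (volume ((univ : Set ℝ) ×ˢ {(0:ℝ)})
          + volume {p : ℝ × ℝ | p.1 + p.2 = 1})) :=
        le_trans (measure_union_le _ _) (add_le_add le_rfl
          (le_trans (measure_union_le _ _) (add_le_add le_rfl (measure_union_le _ _))))
      _ = ENNReal.ofReal (1/2) := by rw [hR, hL1, hL2, hL3]; simp
  · rw [← hR]
    apply measure_mono
    rintro ⟨x, y⟩ ⟨hx, hy⟩
    simp only [mem_Ioo] at hx hy
    exact ⟨le_of_lt hx.1, le_of_lt hy.1, by dsimp only at hy ⊢; linarith [hy.2]⟩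

theorem triLemB : volume {x : EuclideanSpace ℝ (Fin 2) | 0 ≤ x 0 ∧ 0 ≤ x 1 ∧ x 0 + x 1 ≤ 1}
    = ENNReal.ofReal (1/2) := by
  have hψ : MeasurePreserving ((MeasurableEquiv.finTwoArrow (α := ℝ)) ∘
      (MeasurableEquiv.toLp 2 (Fin 2 → ℝ)).symm) volume volume :=
    (volume_preserving_finTwoArrow ℝ).comp (EuclideanSpace.volume_preserving_symm_measurableEquiv_toLp (Fin 2))
  have hmeas : MeasurableSet {p : ℝ × ℝ | 0 ≤ p.1 ∧ 0 ≤ p.2 ∧ p.1 + p.2 ≤ 1} :=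
    (measurableSet_le measurable_const measurable_fst).inter
      ((measurableSet_le measurable_const measurable_snd).inter
        (measurableSet_le (measurable_fst.add measurable_snd) measurable_const))
  have := hψ.measure_preimage hmeas.nullMeasurableSet
  rw [← triLemA, ← this]
  rfl

theorem triLemB1 : convexHull ℝ ({0, triB0, triB1} : Set (EuclideanSpace ℝ (Fin 2)))
    = {x : EuclideanSpace ℝ (Fin 2) | 0 ≤ x 0 ∧ 0 ≤ x 1 ∧ x 0 + x 1 ≤ 1} := by
  apply le_antisymm
  · apply convexHull_min
    · rintro x (rfl | rfl | rfl)
      · simp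
      · simp [triB0, EuclideanSpace.single_apply]
      · simp [triB1, EuclideanSpace.single_apply]
    · intro x hx y hy s t hs ht hst
      obtain ⟨hx0, hx1, hx2⟩ := hx
      obtain ⟨hy0, hy1, hy2⟩ := hy
      refine ⟨?_, ?_, ?_⟩ <;>
        simp only [mem_setOf_eq, PiLp.add_apply, PiLp.smul_apply, smul_eq_mul] <;> nlinarith
  · intro x hx
    obtain ⟨hx0, hx1, hx2⟩ := hx
    rw [convexHull_insert (by simp : ({triB0, triB1} : Set _).Nonempty), convexHull_pair]
    rw [mem_convexJoin]
    by_cases ht : x 0 + x 1 = 0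
    · have h0 : x 0 = 0 := by linarith
      have h1 : x 1 = 0 := by linarith
      have hx0' : x = 0 := by
        ext i
        fin_cases i <;> simp [h0, h1]
      exact ⟨0, rfl, triB0, left_mem_segment _ _ _, by rw [hx0']; exact left_mem_segment _ _ _⟩
    · set T := x 0 + x 1 with hT
      have hTpos : 0 < T := lt_of_le_of_ne (by linarith) (Ne.symm ht)
      refine ⟨0, rfl, (x 0 / T) • triB0 + (x 1 / T) • triB1, ?_, ?_⟩
      · exact ⟨x 0 / T, x 1 / T, by positivity, by positivity, by field_simp; linarith [hT], rfl⟩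
      · refine ⟨1 - T, T, by linarith, le_of_lt hTpos, by ring, ?_⟩
        ext i
        simp only [PiLp.add_apply, PiLp.smul_apply, smul_eq_mul, PiLp.zero_apply, mul_zero,
          triB0, triB1, EuclideanSpace.single_apply]
        fin_cases i <;> simp <;> field_simp

theorem triLemC (a : Fin 3 → EuclideanSpace ℝ (Fin 2))
    (Emat : Matrix (Fin 2) (Fin 2) ℝ)
    (hE : ∀ r c, Emat r c = a (c.succ) r - a 0 r) :
    volume (convexHull ℝ (Set.range a)) = ENNReal.ofReal (|Emat.det| / 2) := by
  set L := Matrix.toEuclideanLin Emat with hL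
  set f : EuclideanSpace ℝ (Fin 2) →ᵃ[ℝ] EuclideanSpace ℝ (Fin 2) :=
    AffineMap.const ℝ (EuclideanSpace ℝ (Fin 2)) (a 0) + L.toAffineMap with hf
  have hfx : ∀ x, f x = a 0 + L x := fun x => rfl
  have himg : f '' ({0, triB0, triB1} : Set (EuclideanSpace ℝ (Fin 2))) = Set.range a := by
    have h0 : f 0 = a 0 := by rw [hfx]; simp
    have h1 : f triB0 = a 1 := by
      rw [hfx]
      ext r
      simp only [PiLp.add_apply, hL]
      rw [show (Matrix.toEuclideanLin Emat triB0) r = Emat.mulVec triB0 r from rfl]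
      simp [Matrix.mulVec, dotProduct, Fin.sum_univ_two, triB0, EuclideanSpace.single_apply, hE]
    have h2 : f triB1 = a 2 := by
      rw [hfx]
      ext r
      simp only [PiLp.add_apply, hL]
      rw [show (Matrix.toEuclideanLin Emat triB1) r = Emat.mulVec triB1 r from rfl]
      simp [Matrix.mulVec, dotProduct, Fin.sum_univ_two, triB1, EuclideanSpace.single_apply, hE]
    rw [Set.image_insert_eq, Set.image_insert_eq, Set.image_singleton, h0, h1, h2]
    ext x
    constructor
    · rintro (rfl | rfl | rfl) <;> exact ⟨_, rfl⟩
    · rintro ⟨i, rfl⟩; fin_cases i <;> simp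
  have key : convexHull ℝ (Set.range a)
      = (a 0 + ·) '' (L '' (convexHull ℝ ({0, triB0, triB1} : Set (EuclideanSpace ℝ (Fin 2))))) := by
    rw [← himg, ← AffineMap.image_convexHull, ← Set.image_comp]
    rfl
  rw [key]
  have htrans : (a 0 + ·) '' (L '' (convexHull ℝ ({0, triB0, triB1} : Set (EuclideanSpace ℝ (Fin 2)))))
      = a 0 +ᵥ (L '' (convexHull ℝ ({0, triB0, triB1} : Set (EuclideanSpace ℝ (Fin 2))))) := rfl
  rw [htrans, measure_vadd, Measure.addHaar_image_linearMap, triLemB1, triLemB]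
  have hdet : LinearMap.det L = Emat.det := by
    rw [hL, Matrix.toEuclideanLin_eq_toLin, LinearMap.det_toLin]
  rw [hdet, ← ENNReal.ofReal_mul (abs_nonneg _), mul_one_div]

theorem triGram (D : Matrix (Fin 2) (Fin 2) ℝ) (hsym : D 0 1 = D 1 0) (u v : Fin 2 → ℝ) :
    (u ⬝ᵥ D.mulVec u) * (v ⬝ᵥ D.mulVec v) - (u ⬝ᵥ D.mulVec v)^2
      = D.det * (u 0 * v 1 - u 1 * v 0)^2 := by
  simp only [dotProduct, Matrix.mulVec, Matrix.det_fin_two, Fin.sum_univ_two, hsym]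
  ring

end Helpers

/-- For a nondegenerate triangle `K ⊂ ℝ²`, a symmetric positive definite `2×2`
matrix `D`, and `i ≠ j`:
`|K| (∇φ_i)^T D (∇φ_j) = -(det(D)^{1/2} / 2) cot (α i j)`, where `α i j ∈ (0, π)`
satisfies `cos (α i j) = -(q_i^T D q_j)/(‖q_i‖_D ‖q_j‖_D)` with `q_i = ∇φ_i`. -/
theorem stmt9
    (D : Matrix (Fin 2) (Fin 2) ℝ) (hD : D.PosDef)
    (a : Fin 3 → EuclideanSpace ℝ (Fin 2))
    (ha : AffineIndependent ℝ a)
    (φ : Fin 3 → (EuclideanSpace ℝ (Fin 2) →ᵃ[ℝ] ℝ))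
    (hφ : ∀ i j, φ i (a j) = if i = j then 1 else 0)
    (g : Fin 3 → EuclideanSpace ℝ (Fin 2))
    (hg : ∀ i v, (φ i).linear v = ⟪g i, v⟫)
    (α : Fin 3 → Fin 3 → ℝ)
    (hα_mem : ∀ i j, i ≠ j → α i j ∈ Set.Ioo 0 Real.pi)
    (hα : ∀ i j, i ≠ j → Real.cos (α i j)
      = -(((g i : Fin 2 → ℝ) ⬝ᵥ D.mulVec (g j))
          / (Real.sqrt ((g i : Fin 2 → ℝ) ⬝ᵥ D.mulVec (g i))
            * Real.sqrt ((g j : Fin 2 → ℝ) ⬝ᵥ D.mulVec (g j))))) :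
    ∀ i j, i ≠ j →
      (volume (convexHull ℝ (Set.range a))).toReal * ((g i : Fin 2 → ℝ) ⬝ᵥ D.mulVec (g j))
        = -(Real.sqrt D.det / 2) * Real.cot (α i j) := by
  -- notation
  set Emat : Matrix (Fin 2) (Fin 2) ℝ := Matrix.of fun r c => a (c.succ) r - a 0 r with hEmat
  set B : Matrix (Fin 2) (Fin 2) ℝ := Matrix.of fun r c => (g (r.succ) : Fin 2 → ℝ) c with hB
  -- inner products as dot products
  have hlin : ∀ i c, (g i : Fin 2 → ℝ) ⬝ᵥ (fun k => a (Fin.succ c) k - a 0 k)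
      = (if i = Fin.succ c then (1:ℝ) else 0) - (if i = 0 then 1 else 0) := by
    intro i c
    have h1 : (φ i).linear (a (Fin.succ c) - a 0) = φ i (a (Fin.succ c)) - φ i (a 0) := by
      have := (φ i).linearMap_vsub (a (Fin.succ c)) (a 0)
      simpa using this
    have h2 := hg i (a (Fin.succ c) - a 0)
    rw [h1, hφ, hφ] at h2
    have h3 : ⟪g i, a (Fin.succ c) - a 0⟫
        = (g i : Fin 2 → ℝ) ⬝ᵥ (fun k => a (Fin.succ c) k - a 0 k) := by
      simp [PiLp.inner_apply, RCLike.inner_apply, dotProduct, PiLp.sub_apply]; ring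
    rw [h3] at h2
    exact h2.symm
  -- B * Emat = 1
  have hBE : B * Emat = 1 := by
    ext r c
    have := hlin (Fin.succ r) c
    simp only [Matrix.mul_apply, hB, hEmat, Matrix.of_apply, Matrix.one_apply]
    rw [show ∑ k, (g (Fin.succ r) : Fin 2 → ℝ) k * (a (Fin.succ c) k - a 0 k)
        = (g (Fin.succ r) : Fin 2 → ℝ) ⬝ᵥ (fun k => a (Fin.succ c) k - a 0 k) from rfl, this]
    simp [Fin.succ_inj, Fin.succ_ne_zero]
  have hdetBE : B.det * Emat.det = 1 := by rw [← Matrix.det_mul, hBE, Matrix.det_one]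
  have hdetB : B.det ≠ 0 := left_ne_zero_of_mul_eq_one hdetBE
  have hdetE : Emat.det ≠ 0 := right_ne_zero_of_mul_eq_one hdetBE
  -- sum of gradients is zero
  have hsum : ∀ k, (g 0 : Fin 2 → ℝ) k + (g 1 : Fin 2 → ℝ) k + (g 2 : Fin 2 → ℝ) k = 0 := by
    set s : Fin 2 → ℝ := fun k => (g 0 : Fin 2 → ℝ) k + (g 1 : Fin 2 → ℝ) k + (g 2 : Fin 2 → ℝ) k
      with hs
    have hsE : s ᵥ* Emat = 0 := by
      funext c
      have e0 := hlin 0 c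
      have e1 := hlin 1 c
      have e2 := hlin 2 c
      simp only [dotProduct, Fin.sum_univ_two] at e0 e1 e2
      simp only [Matrix.vecMul, dotProduct, Fin.sum_univ_two, hEmat, Matrix.of_apply, hs,
        Pi.zero_apply]
      fin_cases c <;> simp at e0 e1 e2 ⊢ <;> linarith
    have hres : s = 0 := by
      have h1 : (s ᵥ* Emat) ᵥ* Emat⁻¹ = s := by
        rw [Matrix.vecMul_vecMul, Matrix.mul_nonsing_inv _ hdetE.isUnit, Matrix.vecMul_one]
      rw [hsE, Matrix.zero_vecMul] at h1
      exact h1.symm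
    intro k
    exact congrFun hres k
  -- squared cross products all agree
  have hcross : ∀ i j : Fin 3, i ≠ j →
      ((g i : Fin 2 → ℝ) 0 * (g j : Fin 2 → ℝ) 1 - (g i : Fin 2 → ℝ) 1 * (g j : Fin 2 → ℝ) 0)^2
        = B.det^2 := by
    intro i j hij
    have e0 : (g 0 : Fin 2 → ℝ) 0 = -((g 1 : Fin 2 → ℝ) 0) - (g 2 : Fin 2 → ℝ) 0 := by
      have := hsum 0; linarith
    have e1 : (g 0 : Fin 2 → ℝ) 1 = -((g 1 : Fin 2 → ℝ) 1) - (g 2 : Fin 2 → ℝ) 1 := by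
      have := hsum 1; linarith
    have hBdet : B.det = (g 1 : Fin 2 → ℝ) 0 * (g 2 : Fin 2 → ℝ) 1
        - (g 1 : Fin 2 → ℝ) 1 * (g 2 : Fin 2 → ℝ) 0 := by
      simp [Matrix.det_fin_two, hB]
    rw [hBdet]
    fin_cases i <;> fin_cases j <;>
      simp only [Fin.zero_eta, Fin.mk_one, Fin.reduceFinMk] <;>
      first
        | exact absurd rfl hij
        | (rw [e0, e1]; ring)
        | ring
  -- main computation
  intro i j hij
  set ni := (g i : Fin 2 → ℝ) ⬝ᵥ D.mulVec (g i) with hni_def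
  set nj := (g j : Fin 2 → ℝ) ⬝ᵥ D.mulVec (g j) with hnj_def
  set c := (g i : Fin 2 → ℝ) ⬝ᵥ D.mulVec (g j) with hc_def
  have hsym : D 0 1 = D 1 0 := by
    have := hD.isHermitian.apply 1 0
    simpa using this
  have huine : (g i : Fin 2 → ℝ) ≠ 0 := by
    intro h
    have h2 := hcross i j hij
    rw [h] at h2
    simp at h2
    exact hdetB (by nlinarith [sq_nonneg B.det])
  have hujne : (g j : Fin 2 → ℝ) ≠ 0 := by
    intro h
    have h2 := hcross i j hij
    rw [h] at h2
    simp at h2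
    exact hdetB (by nlinarith [sq_nonneg B.det])
  have hni : 0 < ni := by
    rw [hni_def]; simpa using hD.dotProduct_mulVec_pos huine
  have hnj : 0 < nj := by
    rw [hnj_def]; simpa using hD.dotProduct_mulVec_pos hujne
  have hd : 0 < D.det := hD.det_pos
  have hgram : ni * nj - c^2 = D.det * B.det^2 := by
    have hG := triGram D hsym (g i) (g j)
    rw [hcross i j hij] at hG
    rw [hni_def, hnj_def, hc_def]
    exact hG
  have hvol : (volume (convexHull ℝ (Set.range a))).toReal = |Emat.det| / 2 := by
    rw [triLemC a Emat (fun r c => rfl), ENNReal.toReal_ofReal (by positivity)]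
  have hmem := hα_mem i j hij
  have hcos := hα i j hij
  rw [← hc_def, ← hni_def, ← hnj_def] at hcos
  have hsinpos : 0 < Real.sin (α i j) := Real.sin_pos_of_pos_of_lt_pi hmem.1 hmem.2
  have habsB : (0:ℝ) < |B.det| := abs_pos.mpr hdetB
  have hsni : 0 < Real.sqrt ni := Real.sqrt_pos.mpr hni
  have hsnj : 0 < Real.sqrt nj := Real.sqrt_pos.mpr hnj
  have hsd : 0 < Real.sqrt D.det := Real.sqrt_pos.mpr hd
  have s1 : Real.sqrt ni ^ 2 = ni := Real.sq_sqrt hni.le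
  have s2 : Real.sqrt nj ^ 2 = nj := Real.sq_sqrt hnj.le
  have hsin : Real.sin (α i j) = Real.sqrt D.det * |B.det| / (Real.sqrt ni * Real.sqrt nj) := by
    rw [Real.sin_eq_sqrt_one_sub_cos_sq hmem.1.le hmem.2.le, hcos]
    have h2 : 1 - (-(c / (Real.sqrt ni * Real.sqrt nj)))^2 = (D.det * B.det^2) / (ni * nj) := by
      have h3 : (-(c / (Real.sqrt ni * Real.sqrt nj)))^2 = c^2 / (ni * nj) := by
        rw [neg_sq, div_pow, mul_pow, s1, s2]
      rw [h3, eq_div_iff (by positivity : ni * nj ≠ 0), sub_mul, one_mul,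
        div_mul_cancel₀ _ (by positivity : ni * nj ≠ 0)]
      linarith [hgram]
    rw [h2, Real.sqrt_div (by positivity), Real.sqrt_mul hd.le, Real.sqrt_sq_eq_abs,
      Real.sqrt_mul hni.le]
  have hcot : Real.cot (α i j) = -(c / (Real.sqrt D.det * |B.det|)) := by
    rw [Real.cot_eq_cos_div_sin, hcos, hsin]
    field_simp
  have habsE : |Emat.det| = 1 / |B.det| := by
    rw [eq_div_iff habsB.ne', ← abs_mul, mul_comm, hdetBE, abs_one]
  rw [hvol, hcot, habsE]
  field_simp
end
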